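/- arXiv:1406.1916 — 2 statements merged into one kernel-verified Lean document; each statement's English description precedes it below -/
import Mathlib

section
/- Let T : ℝᵖ → ℝᵐ be a linear map whose restriction to a compact smooth embedded submanifold M ⊆ ℝᵖ satisfies (1−κ)c‖z−z'‖ ≤ ‖Tz−Tz'‖ ≤ (1+κ)c‖z−z'‖ for all z, z' ∈ M, for some constants c > 0 and κ ∈ (0,1). Then the differential of T restricted to the tangent space T_zM is injective at every z ∈ M, so T restricted to M is a smooth immersion, and being an injective immersion of a compact manifold, T|_M is a smooth embedding (a diffeomorphism onto its image). -/
open Manifold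

set_option maxHeartbeats 1000000

/-- If a linear map `T` is bi-Lipschitz (with constants `(1−κ)c ≤ · ≤ (1+κ)c`)
on the image of a compact smooth embedded submanifold `M` of `ℝᵖ` (realized by
a smooth embedding `f : M → ℝᵖ` with injective differential), then the
differential of `T ∘ f` is injective at every point (so `T` restricted to the
submanifold is a smooth immersion), and `T ∘ f` is a (smooth, topological)
embedding, i.e. `T` restricted to the submanifold is a diffeomorphism onto its
image. -/
theorem linear_biLipschitz_on_submanifold_embedding
    {d p m : ℕ} {M : Type*} [TopologicalSpace M]
    [ChartedSpace (EuclideanSpace ℝ (Fin d)) M]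
    [IsManifold (𝓡 d) (⊤ : ℕ∞) M] [CompactSpace M]
    (f : M → EuclideanSpace ℝ (Fin p))
    (hf : ContMDiff (𝓡 d) 𝓘(ℝ, EuclideanSpace ℝ (Fin p)) (⊤ : ℕ∞) f)
    (hfemb : Topology.IsEmbedding f)
    (hfimm : ∀ z : M, Function.Injective (mfderiv (𝓡 d) 𝓘(ℝ, EuclideanSpace ℝ (Fin p)) f z))
    (T : EuclideanSpace ℝ (Fin p) →ₗ[ℝ] EuclideanSpace ℝ (Fin m))
    (c κ : ℝ) (hc : 0 < c) (hκ0 : 0 < κ) (hκ1 : κ < 1)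
    (hlow : ∀ z z' : M, (1 - κ) * c * ‖f z - f z'‖ ≤ ‖T (f z) - T (f z')‖)
    (hhigh : ∀ z z' : M, ‖T (f z) - T (f z')‖ ≤ (1 + κ) * c * ‖f z - f z'‖) :
    (∀ z : M, Function.Injective
        (mfderiv (𝓡 d) 𝓘(ℝ, EuclideanSpace ℝ (Fin m)) (fun w => T (f w)) z)) ∧
    ContMDiff (𝓡 d) 𝓘(ℝ, EuclideanSpace ℝ (Fin m)) (⊤ : ℕ∞) (fun w => T (f w)) ∧
    Topology.IsEmbedding (fun w => T (f w)) := by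
  set Tc : EuclideanSpace ℝ (Fin p) →L[ℝ] EuclideanSpace ℝ (Fin m) :=
    LinearMap.toContinuousLinearMap T with hTc
  have hTcf : ∀ x, Tc x = T x := fun _ => rfl
  have hpos : 0 < (1 - κ) * c := mul_pos (by linarith) hc
  -- key: lower bound for T on tangent vectors
  have key : ∀ (z : M) (Df : EuclideanSpace ℝ (Fin d) →L[ℝ] EuclideanSpace ℝ (Fin p)),
      HasMFDerivAt (𝓡 d) 𝓘(ℝ, EuclideanSpace ℝ (Fin p)) f z Df →
      ∀ v : EuclideanSpace ℝ (Fin d), (1 - κ) * c * ‖Df v‖ ≤ ‖T (Df v)‖ := by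
    intro z Df hMF v
    set e := extChartAt (𝓡 d) z with he
    set x : EuclideanSpace ℝ (Fin d) := e z with hx
    have hfd : HasFDerivAt (fun y => f (e.symm y)) Df x := by
      have h2 := hMF.2
      have heq : writtenInExtChartAt (𝓡 d) 𝓘(ℝ, EuclideanSpace ℝ (Fin p)) z f =
          fun y => f (e.symm y) := by
        funext y
        simp [writtenInExtChartAt, he, chartAt_self_eq]
      rw [heq] at h2
      have hrange : Set.range (𝓡 d : EuclideanSpace ℝ (Fin d) → EuclideanSpace ℝ (Fin d)) =
          Set.univ := by
        simp [modelWithCornersSelf_coe]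
      rw [hrange] at h2
      exact hasFDerivWithinAt_univ.1 h2
    set h : ℝ → EuclideanSpace ℝ (Fin p) := fun t => f (e.symm (x + t • v)) with hh
    have hline : HasDerivAt (fun t : ℝ => x + t • v) v 0 := by
      simpa using ((hasDerivAt_id (0 : ℝ)).smul_const v).const_add x
    have hcurve : HasDerivAt h (Df v) 0 := by
      have hfd0 : HasFDerivAt (fun y => f (e.symm y)) Df (x + (0 : ℝ) • v) := by
        simpa using hfd
      have := hfd0.comp_hasDerivAt (x := (0:ℝ)) hline
      exact this
    have hTcurve : HasDerivAt (fun t => T (h t)) (T (Df v)) 0 := by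
      have := Tc.hasFDerivAt.comp_hasDerivAt (x := (0:ℝ)) hcurve
      exact this
    have t1 : Filter.Tendsto (fun t => (1 - κ) * c * ‖slope h 0 t‖)
        (nhdsWithin 0 {(0 : ℝ)}ᶜ) (nhds ((1 - κ) * c * ‖Df v‖)) :=
      ((hasDerivAt_iff_tendsto_slope.1 hcurve).norm).const_mul _
    have t2 : Filter.Tendsto (fun t => ‖slope (fun t => T (h t)) 0 t‖)
        (nhdsWithin 0 {(0 : ℝ)}ᶜ) (nhds ‖T (Df v)‖) :=
      (hasDerivAt_iff_tendsto_slope.1 hTcurve).norm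
    refine le_of_tendsto_of_tendsto' t1 t2 ?_
    intro t
    have h1 : slope h 0 t = t⁻¹ • (h t - h 0) := by simp [slope_def_module]
    have h2 : slope (fun t => T (h t)) 0 t = t⁻¹ • (T (h t) - T (h 0)) := by
      simp [slope_def_module]
    rw [h1, h2, norm_smul, norm_smul]
    have hb : (1 - κ) * c * ‖h t - h 0‖ ≤ ‖T (h t) - T (h 0)‖ := by
      have h0 : h 0 = f (e.symm (x + (0 : ℝ) • v)) := by simp [hh]
      have := hlow (e.symm (x + t • v)) (e.symm (x + (0 : ℝ) • v))
      rw [h0]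
      simpa [hh] using this
    calc (1 - κ) * c * (‖t⁻¹‖ * ‖h t - h 0‖)
        = ‖t⁻¹‖ * ((1 - κ) * c * ‖h t - h 0‖) := by ring
      _ ≤ ‖t⁻¹‖ * ‖T (h t) - T (h 0)‖ :=
          mul_le_mul_of_nonneg_left hb (norm_nonneg _)
  have hmfd : ∀ z : M, mfderiv (𝓡 d) 𝓘(ℝ, EuclideanSpace ℝ (Fin m)) (fun w => T (f w)) z =
      Tc.comp (mfderiv (𝓡 d) 𝓘(ℝ, EuclideanSpace ℝ (Fin p)) f z) := by
    intro z
    have hcomp := mfderiv_comp z (I' := 𝓘(ℝ, EuclideanSpace ℝ (Fin p)))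
      (Tc.mdifferentiableAt) (hf.mdifferentiableAt (by simp))
    have hTcm : mfderiv 𝓘(ℝ, EuclideanSpace ℝ (Fin p)) 𝓘(ℝ, EuclideanSpace ℝ (Fin m))
        (fun x => Tc x) (f z) = Tc := by
      rw [mfderiv_eq_fderiv]
      exact Tc.fderiv
    have := hcomp
    rw [hTcm] at this
    exact this
  refine ⟨?_, ?_, ?_⟩
  · intro z
    have hmd : MDifferentiableAt (𝓡 d) 𝓘(ℝ, EuclideanSpace ℝ (Fin p)) f z :=
      hf.mdifferentiableAt (by simp)
    have main : ∀ (Df : EuclideanSpace ℝ (Fin d) →L[ℝ] EuclideanSpace ℝ (Fin p)),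
        HasMFDerivAt (𝓡 d) 𝓘(ℝ, EuclideanSpace ℝ (Fin p)) f z Df →
        ∀ u : EuclideanSpace ℝ (Fin d), T (Df u) = 0 → Df u = 0 := by
      intro Df hDf u hTu
      have hle := key z Df hDf u
      rw [hTu, norm_zero] at hle
      have h1 := norm_nonneg (Df u)
      have h2 : ‖Df u‖ = 0 := by nlinarith
      exact norm_eq_zero.1 h2
    rw [hmfd z]
    intro v w hvw
    have hvw' : T ((mfderiv (𝓡 d) 𝓘(ℝ, EuclideanSpace ℝ (Fin p)) f z :
        EuclideanSpace ℝ (Fin d) →L[ℝ] EuclideanSpace ℝ (Fin p)) (v : EuclideanSpace ℝ (Fin d)))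
        = T ((mfderiv (𝓡 d) 𝓘(ℝ, EuclideanSpace ℝ (Fin p)) f z :
        EuclideanSpace ℝ (Fin d) →L[ℝ] EuclideanSpace ℝ (Fin p)) (w : EuclideanSpace ℝ (Fin d))) :=
      hvw
    have h0 : T ((mfderiv (𝓡 d) 𝓘(ℝ, EuclideanSpace ℝ (Fin p)) f z :
        EuclideanSpace ℝ (Fin d) →L[ℝ] EuclideanSpace ℝ (Fin p))
        ((v : EuclideanSpace ℝ (Fin d)) - (w : EuclideanSpace ℝ (Fin d)))) = 0 := by
      rw [map_sub]
      exact (T.map_sub _ _).trans (by rw [hvw', sub_self])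
    have h2 := main (mfderiv (𝓡 d) 𝓘(ℝ, EuclideanSpace ℝ (Fin p)) f z) hmd.hasMFDerivAt
      ((v : EuclideanSpace ℝ (Fin d)) - (w : EuclideanSpace ℝ (Fin d))) h0
    exact hfimm z (sub_eq_zero.1 ((map_sub _ v w).symm.trans h2))
  · have hTsm : ContMDiff 𝓘(ℝ, EuclideanSpace ℝ (Fin p)) 𝓘(ℝ, EuclideanSpace ℝ (Fin m)) (⊤ : ℕ∞)
        (fun x => Tc x) := Tc.contDiff.contMDiff
    exact hTsm.comp hf
  · have hcont : Continuous (fun w => T (f w)) := by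
      have : Continuous (fun w => Tc (f w)) := Tc.continuous.comp hfemb.continuous
      simpa [hTcf] using this
    have hinj : Function.Injective (fun w => T (f w)) := by
      intro z z' hzz'
      apply hfemb.injective
      have h0 : T (f z) = T (f z') := hzz'
      have h1 := hlow z z'
      rw [h0, sub_self, norm_zero] at h1
      have h2 : ‖f z - f z'‖ ≤ 0 := by
        have h4 : (1 - κ) * c * ‖f z - f z'‖ ≤ (1 - κ) * c * 0 := by
          rw [mul_zero]; exact h1
        exact le_of_mul_le_mul_left h4 hpos
      have h3 := le_antisymm h2 (norm_nonneg _)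
      exact sub_eq_zero.1 (norm_eq_zero.1 h3)
    exact (hcont.isClosedEmbedding hinj).isEmbedding
end

section
/- If x₁,…,xₙ ∈ ℝᵐ are pairwise distinct, then the Gaussian kernel matrix K with entries K_{ij} = exp(−λ‖xᵢ−xⱼ‖²), λ > 0, is strictly positive definite, hence invertible. -/
open Finset

lemma aux_expand {n m : ℕ} (x : Fin n → EuclideanSpace ℝ (Fin m)) (c : Fin n → ℝ) (k : ℕ) :
    ∑ i, ∑ j, c i * c j * (inner ℝ (x i) (x j) : ℝ) ^ k
      = ∑ p : Fin k → Fin m, (∑ i, c i * ∏ l, x i (p l)) ^ 2 := by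
  have hin : ∀ i j : Fin n, (inner ℝ (x i) (x j) : ℝ) = ∑ a, x i a * x j a := by
    intro i j
    simp [PiLp.inner_apply, RCLike.inner_apply, conj_trivial, mul_comm]
  calc ∑ i, ∑ j, c i * c j * (inner ℝ (x i) (x j) : ℝ) ^ k
      = ∑ i, ∑ j, ∑ p : Fin k → Fin m,
          (c i * ∏ l, x i (p l)) * (c j * ∏ l, x j (p l)) := by
        refine Finset.sum_congr rfl fun i _ => Finset.sum_congr rfl fun j _ => ?_
        rw [hin, Fintype.sum_pow, Finset.mul_sum]
        refine Finset.sum_congr rfl fun p _ => ?_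
        rw [Finset.prod_mul_distrib]
        ring
    _ = ∑ i, ∑ p : Fin k → Fin m, ∑ j,
          (c i * ∏ l, x i (p l)) * (c j * ∏ l, x j (p l)) := by
        exact Finset.sum_congr rfl fun i _ => Finset.sum_comm
    _ = ∑ p : Fin k → Fin m, ∑ i, ∑ j,
          (c i * ∏ l, x i (p l)) * (c j * ∏ l, x j (p l)) :=
        Finset.sum_comm
    _ = ∑ p : Fin k → Fin m, (∑ i, c i * ∏ l, x i (p l)) ^ 2 := by
        refine Finset.sum_congr rfl fun p _ => ?_
        rw [sq, Finset.sum_mul_sum]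

lemma aux_prod_multiset {α β : Type*} [CommMonoid β] (d : α →₀ ℕ) (g : α → β) :
    (d.toMultiset.map g).prod = d.prod fun a e => g a ^ e := by
  rw [Finsupp.toMultiset_map, Finsupp.prod_toMultiset, Finsupp.prod_mapDomain_index]
  · simp
  · intros; rw [pow_add]

lemma aux_multiset_fin {m : ℕ} (s : Multiset (Fin m)) (g : Fin m → ℝ) :
    (s.map g).prod = ∏ l : Fin s.toList.length, g (s.toList.get l) := by
  simp only [List.get_eq_getElem, Fin.prod_univ_fun_getElem]
  rw [← Multiset.prod_coe, ← Multiset.map_coe, s.coe_toList]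

lemma aux_sep {n m : ℕ} (x : Fin n → EuclideanSpace ℝ (Fin m)) (hx : Function.Injective x)
    (c : Fin n → ℝ)
    (H : ∀ (k : ℕ) (p : Fin k → Fin m), ∑ i, c i * ∏ l, x i (p l) = 0) :
    ∀ j, c j = 0 := by
  have Hm : ∀ s : Multiset (Fin m), ∑ i, c i * (s.map fun a => x i a).prod = 0 := by
    intro s
    calc ∑ i, c i * (s.map fun a => x i a).prod
        = ∑ i, c i * ∏ l, x i (s.toList.get l) := by
          refine Finset.sum_congr rfl fun i _ => by rw [aux_multiset_fin]
      _ = 0 := H s.toList.length (fun l => s.toList.get l)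
  have HL : ∀ q : MvPolynomial (Fin m) ℝ,
      ∑ i, c i * MvPolynomial.eval (fun a => x i a) q = 0 := by
    intro q
    have expand : ∀ i, MvPolynomial.eval (fun a => x i a) q
        = ∑ d ∈ q.support, q.coeff d * ((d.toMultiset.map fun a => x i a).prod) := by
      intro i
      conv_lhs => rw [q.as_sum]
      rw [map_sum]
      refine Finset.sum_congr rfl fun d _ => ?_
      rw [MvPolynomial.eval_monomial, aux_prod_multiset]
    simp only [expand, Finset.mul_sum]
    rw [Finset.sum_comm]
    refine Finset.sum_eq_zero fun d _ => ?_
    have := Hm d.toMultiset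
    calc ∑ i, c i * (q.coeff d * (d.toMultiset.map fun a => x i a).prod)
        = q.coeff d * ∑ i, c i * (d.toMultiset.map fun a => x i a).prod := by
          rw [Finset.mul_sum]; refine Finset.sum_congr rfl fun i _ => by ring
      _ = 0 := by rw [this, mul_zero]
  intro j
  set q : MvPolynomial (Fin m) ℝ :=
    ∏ i' ∈ Finset.univ.erase j, (∑ a, (MvPolynomial.X a - MvPolynomial.C (x i' a)) ^ 2) with hqdef
  have heval : ∀ i, MvPolynomial.eval (fun a => x i a) q
      = ∏ i' ∈ Finset.univ.erase j, ∑ a, (x i a - x i' a) ^ 2 := by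
    intro i
    simp [hqdef, map_prod, map_sum]
  have hq := HL q
  rw [Finset.sum_eq_single j] at hq
  · have hpos : 0 < ∏ i' ∈ Finset.univ.erase j, ∑ a, (x j a - x i' a) ^ 2 := by
      refine Finset.prod_pos fun i' hi' => ?_
      have hne : x j ≠ x i' := fun h => (Finset.ne_of_mem_erase hi') (hx h.symm)
      have : ∃ a, x j a ≠ x i' a := by
        by_contra hcon
        push_neg at hcon
        exact hne (PiLp.ext hcon)
      obtain ⟨a, ha⟩ := this
      refine Finset.sum_pos' (fun b _ => sq_nonneg _) ⟨a, Finset.mem_univ a, ?_⟩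
      exact pow_two_pos_of_ne_zero (sub_ne_zero.mpr ha)
    rw [heval j] at hq
    exact (mul_eq_zero.mp hq).resolve_right hpos.ne'
  · intro i _ hij
    rw [heval i]
    have hzero : ∏ i' ∈ Finset.univ.erase j, ∑ a, (x i a - x i' a) ^ 2 = 0 := by
      refine Finset.prod_eq_zero (Finset.mem_erase.mpr ⟨hij, Finset.mem_univ i⟩) ?_
      simp
    rw [hzero, mul_zero]
  · intro h; exact absurd (Finset.mem_univ j) h

/-- The Gaussian kernel matrix at pairwise distinct points is positive definite,
hence invertible. -/
theorem gaussian_kernel_posDef {n m : ℕ} (lam : ℝ) (hlam : 0 < lam)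
    (x : Fin n → EuclideanSpace ℝ (Fin m)) (hx : Function.Injective x) :
    (Matrix.of fun i j => Real.exp (-lam * ‖x i - x j‖ ^ 2)).PosDef ∧
      IsUnit (Matrix.of fun i j => Real.exp (-lam * ‖x i - x j‖ ^ 2)).det := by
  have hpd : (Matrix.of fun i j => Real.exp (-lam * ‖x i - x j‖ ^ 2)).PosDef := by
    rw [Matrix.posDef_iff_dotProduct_mulVec]
    constructor
    · show _ = _
      ext i j
      simp only [Matrix.conjTranspose_apply, Matrix.of_apply, star_trivial]
      rw [norm_sub_rev]
    · intro v hv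
      set c : Fin n → ℝ := fun i => v i * Real.exp (-lam * ‖x i‖ ^ 2) with hc
      have hQ : dotProduct (star v)
            ((Matrix.of fun i j => Real.exp (-lam * ‖x i - x j‖ ^ 2)).mulVec v)
          = ∑ i, ∑ j, c i * c j * Real.exp (2 * lam * (inner ℝ (x i) (x j) : ℝ)) := by
        simp only [dotProduct, Matrix.mulVec, Matrix.of_apply, star_trivial,
          Finset.mul_sum]
        refine Finset.sum_congr rfl fun i _ => Finset.sum_congr rfl fun j _ => ?_
        have hsplit : (-lam * ‖x i - x j‖ ^ 2)
            = (-lam * ‖x i‖ ^ 2) + (2 * lam * (inner ℝ (x i) (x j) : ℝ)) + (-lam * ‖x j‖ ^ 2) := by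
          rw [norm_sub_sq_real]; ring
        rw [hsplit, Real.exp_add, Real.exp_add, hc]
        ring
      set g : ℕ → ℝ := fun k => ∑ i, ∑ j,
        c i * c j * ((2 * lam * (inner ℝ (x i) (x j) : ℝ)) ^ k / (Nat.factorial k)) with hg
      have hgs : HasSum g (∑ i, ∑ j, c i * c j * Real.exp (2 * lam * (inner ℝ (x i) (x j) : ℝ))) := by
        refine hasSum_sum fun i _ => hasSum_sum fun j _ => ?_
        have h1 : HasSum (fun k => (2 * lam * (inner ℝ (x i) (x j) : ℝ)) ^ k / (Nat.factorial k))
            (Real.exp (2 * lam * (inner ℝ (x i) (x j) : ℝ))) := by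
          rw [Real.exp_eq_exp_ℝ]
          exact NormedSpace.expSeries_div_hasSum_exp _
        exact h1.mul_left _
      have hterm : ∀ k, g k = ((2 * lam) ^ k / (Nat.factorial k))
          * ∑ p : Fin k → Fin m, (∑ i, c i * ∏ l, x i (p l)) ^ 2 := by
        intro k
        rw [← aux_expand x c k, Finset.mul_sum]
        refine Finset.sum_congr rfl fun i _ => ?_
        rw [Finset.mul_sum]
        refine Finset.sum_congr rfl fun j _ => ?_
        rw [mul_pow]
        ring
      have hnn : ∀ k, 0 ≤ g k := by
        intro k
        rw [hterm]
        have h2 : (0:ℝ) ≤ ∑ p : Fin k → Fin m, (∑ i, c i * ∏ l, x i (p l)) ^ 2 :=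
          Finset.sum_nonneg fun p _ => sq_nonneg _
        positivity
      have hQnn : 0 ≤ ∑ i, ∑ j, c i * c j * Real.exp (2 * lam * (inner ℝ (x i) (x j) : ℝ)) :=
        hasSum_le hnn hasSum_zero hgs
      rw [hQ]
      rcases hQnn.lt_or_eq with h | h
      · exact h
      · exfalso
        have hg0 : ∀ k, g k = 0 := by
          intro k
          have hle : g k ≤ 0 := h ▸ le_hasSum hgs k fun j _ => hnn j
          exact le_antisymm hle (hnn k)
        have H : ∀ (k : ℕ) (p : Fin k → Fin m), ∑ i, c i * ∏ l, x i (p l) = 0 := by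
          intro k p
          have hk := hg0 k
          rw [hterm] at hk
          have hcoef : (0:ℝ) < (2 * lam) ^ k / (Nat.factorial k) := by positivity
          have hsum0 : ∑ p : Fin k → Fin m, (∑ i, c i * ∏ l, x i (p l)) ^ 2 = 0 :=
            (mul_eq_zero.mp hk).resolve_left hcoef.ne'
          have := (Finset.sum_eq_zero_iff_of_nonneg fun q _ => sq_nonneg _).mp hsum0 p
            (Finset.mem_univ p)
          exact pow_eq_zero_iff two_ne_zero |>.mp this
        have hc0 := aux_sep x hx c H
        apply hv
        funext j
        have := hc0 j
        rw [hc] at this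
        exact (mul_eq_zero.mp this).resolve_right (Real.exp_ne_zero _)
  exact ⟨hpd, hpd.det_pos.ne'.isUnit⟩
end
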